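/- For $t < t_0$ and $u(t,x) = p_1(t) e^{-|x - q_1(t)|} + p_2(t) e^{-|x - q_2(t)|}$ with $p_j, q_j$ the peakon-antipeakon data, the total energy satisfies $\int_{\mathbb{R}} (u^2(t,x) + u_x^2(t,x))\,dx = 2c_1^2 + 2c_2^2$, where $u_x$ denotes the a.e. derivative of $u$ in $x$. -/

import Mathlib

open Real MeasureTheory Set Filter

lemma hd_exp_sq (x : ℝ) : HasDerivAt (fun y => Real.exp y ^ 2 / 2) (Real.exp x ^ 2) x := by
  have h := ((Real.hasDerivAt_exp x).pow 2).div_const 2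
  refine h.congr_deriv ?_
  ring

lemma hd_exp_neg_sq (x : ℝ) :
    HasDerivAt (fun y => -(Real.exp (-y) ^ 2 / 2)) (Real.exp (-x) ^ 2) x := by
  have h1 : HasDerivAt (fun y : ℝ => Real.exp (-y)) (-Real.exp (-x)) x := by
    exact ((Real.hasDerivAt_exp (-x)).comp x (hasDerivAt_neg x)).congr_deriv (by ring)
  have h := ((h1.pow 2).div_const 2).neg
  refine h.congr_deriv ?_
  ring

lemma integrableOn_exp_sq_Iic (a : ℝ) : IntegrableOn (fun x => Real.exp x ^ 2) (Set.Iic a) := by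
  apply Integrable.mono' ((integrableOn_exp_Iic a).const_mul (Real.exp a))
  · exact (Real.continuous_exp.pow 2).aestronglyMeasurable
  · filter_upwards [ae_restrict_mem measurableSet_Iic] with x hx
    have h1 : Real.exp x ≤ Real.exp a := Real.exp_le_exp.2 hx
    have h2 := Real.exp_pos x
    rw [Real.norm_eq_abs, abs_of_nonneg (by positivity)]
    nlinarith

lemma tendsto_exp_sq_atBot : Tendsto (fun y => Real.exp y ^ 2 / 2) atBot (nhds 0) := by
  have h : Tendsto (fun y : ℝ => Real.exp y ^ 2) atBot (nhds 0) := by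
    have := Real.tendsto_exp_atBot.mul Real.tendsto_exp_atBot
    simpa [pow_two] using this
  simpa using h.div_const 2

lemma integral_exp_sq_Iic (a : ℝ) :
    ∫ x in Set.Iic a, Real.exp x ^ 2 = Real.exp a ^ 2 / 2 := by
  have h := integral_Iic_of_hasDerivAt_of_tendsto' (f := fun y => Real.exp y ^ 2 / 2)
    (fun x _ => hd_exp_sq x) (integrableOn_exp_sq_Iic a) tendsto_exp_sq_atBot
  simpa using h

lemma tendsto_neg_exp_neg_sq_atTop :
    Tendsto (fun y : ℝ => -(Real.exp (-y) ^ 2 / 2)) atTop (nhds 0) := by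
  have h : Tendsto (fun y : ℝ => Real.exp (-y)) atTop (nhds 0) := by
    exact Real.tendsto_exp_neg_atTop_nhds_zero
  have h2 : Tendsto (fun y : ℝ => Real.exp (-y) ^ 2) atTop (nhds 0) := by
    simpa [pow_two] using h.mul h
  simpa using (h2.div_const 2).neg

lemma integrableOn_exp_neg_sq_Ioi (b : ℝ) :
    IntegrableOn (fun x => Real.exp (-x) ^ 2) (Set.Ioi b) :=
  integrableOn_Ioi_deriv_of_nonneg' (fun x _ => hd_exp_neg_sq x)
    (fun x _ => by positivity) tendsto_neg_exp_neg_sq_atTop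

lemma integral_exp_neg_sq_Ioi (b : ℝ) :
    ∫ x in Set.Ioi b, Real.exp (-x) ^ 2 = Real.exp (-b) ^ 2 / 2 := by
  have h := integral_Ioi_of_hasDerivAt_of_nonneg' (g := fun y => -(Real.exp (-y) ^ 2 / 2))
    (a := b) (l := 0)
    (fun x _ => hd_exp_neg_sq x) (fun x _ => by positivity) tendsto_neg_exp_neg_sq_atTop
  simpa using h

lemma integral_exp_sq_ab (a b : ℝ) :
    ∫ x in a..b, Real.exp x ^ 2 = (Real.exp b ^ 2 - Real.exp a ^ 2) / 2 := by
  have h := intervalIntegral.integral_eq_sub_of_hasDerivAt (f := fun y => Real.exp y ^ 2 / 2)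
    (fun x _ => hd_exp_sq x) ((Real.continuous_exp.pow 2).intervalIntegrable a b)
  rw [h]; ring

lemma integral_exp_neg_sq_ab (a b : ℝ) :
    ∫ x in a..b, Real.exp (-x) ^ 2 = (Real.exp (-a) ^ 2 - Real.exp (-b) ^ 2) / 2 := by
  have h := intervalIntegral.integral_eq_sub_of_hasDerivAt
    (f := fun y => -(Real.exp (-y) ^ 2 / 2)) (fun x _ => hd_exp_neg_sq x)
    (((Real.continuous_exp.comp continuous_neg).pow 2).intervalIntegrable a b)
  rw [h]; ring

theorem peakon_antipeakon_energy (c₁ c₂ t₀ : ℝ) (hc₁ : c₁ > 0) (hc₂ : 0 > c₂) (ht₀ : t₀ > 0)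
    (L : ℝ) (hL : L = c₁ - c₂)
    (p₁ p₂ q₁ q₂ : ℝ → ℝ)
    (hp₁ : ∀ t, p₁ t = (c₁ - c₂ * exp (L * (t - t₀))) / (1 - exp (L * (t - t₀))))
    (hp₂ : ∀ t, p₂ t = (c₂ - c₁ * exp (L * (t - t₀))) / (1 - exp (L * (t - t₀))))
    (hq₁ : ∀ t, q₁ t = Real.log L + c₁ * (t - t₀) - Real.log (c₁ - c₂ * exp (L * (t - t₀))))
    (hq₂ : ∀ t, q₂ t = -Real.log L + c₂ * (t - t₀) + Real.log (c₁ * exp (L * (t - t₀)) - c₂))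
    (u ux : ℝ → ℝ → ℝ)
    (hu : ∀ t x, u t x = p₁ t * exp (-|x - q₁ t|) + p₂ t * exp (-|x - q₂ t|))
    (hux : ∀ t x, ux t x =
      if x < q₁ t then u t x
      else if x < q₂ t then p₂ t * exp (x - q₂ t) - p₁ t * exp (q₁ t - x)
      else -u t x) :
    ∀ t < t₀, ∫ x : ℝ, ((u t x) ^ 2 + (ux t x) ^ 2) = 2 * c₁ ^ 2 + 2 * c₂ ^ 2 := by
  subst hL
  intro t ht
  set L := c₁ - c₂ with hLdef
  have hLpos : 0 < L := by rw [hLdef]; linarith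
  set E := Real.exp (L * (t - t₀)) with hEdef
  have hE0 : 0 < E := Real.exp_pos _
  have hE1 : E < 1 := by
    rw [hEdef]
    exact Real.exp_lt_one_iff.2 (mul_neg_of_pos_of_neg hLpos (by linarith))
  have hA : 0 < c₁ - c₂ * E := by nlinarith
  have hB : 0 < c₁ * E - c₂ := by nlinarith
  have hD : 0 < 1 - E := by linarith
  set a := q₁ t with hadef
  set b := q₂ t with hbdef
  set P := p₁ t with hPdef
  set Q := p₂ t with hQdef
  have hPval : P = (c₁ - c₂ * E) / (1 - E) := hp₁ t
  have hQval : Q = (c₂ - c₁ * E) / (1 - E) := hp₂ t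
  have hab' : a - b = Real.log (L ^ 2 * E / ((c₁ - c₂ * E) * (c₁ * E - c₂))) := by
    rw [hadef, hbdef, hq₁ t, hq₂ t,
      Real.log_div (by positivity) (by positivity),
      Real.log_mul (by positivity) hE0.ne',
      Real.log_mul hA.ne' hB.ne', Real.log_pow, hEdef, Real.log_exp]
    push_cast
    ring
  have hr : Real.exp (a - b) = L ^ 2 * E / ((c₁ - c₂ * E) * (c₁ * E - c₂)) := by
    rw [hab', Real.exp_log (by positivity)]
  have hc12 : c₁ * c₂ < 0 := mul_neg_of_pos_of_neg hc₁ hc₂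
  have hrlt : Real.exp (a - b) < 1 := by
    rw [hr, div_lt_one (by positivity)]
    have hneg : 0 < -(c₁ * c₂) := by linarith
    have key : 0 < (-(c₁ * c₂)) * (1 - E) ^ 2 := mul_pos hneg (by positivity)
    rw [hLdef]
    nlinarith [key]
  have habk : a < b := by
    by_contra h
    push_neg at h
    have h1 : (1 : ℝ) ≤ Real.exp (a - b) := Real.one_le_exp (by linarith)
    linarith
  have hea : (0:ℝ) < Real.exp a := Real.exp_pos a
  have heb : (0:ℝ) < Real.exp b := Real.exp_pos b
  set K₁ := (P / Real.exp a + Q / Real.exp b) ^ 2 * 2 with hK₁def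
  set K₃ := (P * Real.exp a + Q * Real.exp b) ^ 2 * 2 with hK₃def
  set f : ℝ → ℝ := fun x => (u t x) ^ 2 + (ux t x) ^ 2 with hfdef
  -- pointwise descriptions
  have heq₁ : Set.EqOn (fun x => K₁ * Real.exp x ^ 2) f (Set.Iio a) := by
    intro x hx
    have hx1 : x < a := hx
    have hx2 : x < b := lt_trans hx1 habk
    have hu' : u t x = P * Real.exp (x - a) + Q * Real.exp (x - b) := by
      rw [hu t x, abs_of_neg (by linarith : x - a < 0), abs_of_neg (by linarith : x - b < 0),
        neg_neg, neg_neg]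
    have hux' : ux t x = u t x := by rw [hux t x, if_pos hx1]
    simp only [hfdef, hux', hu', hK₁def, Real.exp_sub]
    field_simp
    ring
  have heq₂ : Set.EqOn
      (fun x => (2 * P ^ 2 * Real.exp a ^ 2) * Real.exp (-x) ^ 2
        + (2 * Q ^ 2 / Real.exp b ^ 2) * Real.exp x ^ 2) f (Set.Ico a b) := by
    intro x hx
    have hx1 : a ≤ x := hx.1
    have hx2 : x < b := hx.2
    have hu' : u t x = P * Real.exp (a - x) + Q * Real.exp (x - b) := by
      rw [hu t x, abs_of_nonneg (by linarith : (0:ℝ) ≤ x - a),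
        abs_of_neg (by linarith : x - b < 0), neg_neg]
      ring_nf
      rw [hPdef, hQdef]; ring
    have hux' : ux t x = Q * Real.exp (x - b) - P * Real.exp (a - x) := by
      rw [hux t x, if_neg (not_lt.2 hx1), if_pos hx2]
    simp only [hfdef, hux', hu', Real.exp_sub, Real.exp_neg]
    field_simp
    ring
  have heq₃ : Set.EqOn (fun x => K₃ * Real.exp (-x) ^ 2) f (Set.Ici b) := by
    intro x hx
    have hx2 : b ≤ x := hx
    have hx1 : a ≤ x := le_trans habk.le hx2
    have hu' : u t x = P * Real.exp (a - x) + Q * Real.exp (b - x) := by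
      rw [hu t x, abs_of_nonneg (by linarith : (0:ℝ) ≤ x - a),
        abs_of_nonneg (by linarith : (0:ℝ) ≤ x - b)]
      ring_nf
      rw [hPdef, hQdef]; ring
    have hux' : ux t x = -u t x := by
      rw [hux t x, if_neg (not_lt.2 hx1), if_neg (not_lt.2 hx2)]
    simp only [hfdef, hux', hu', hK₃def, Real.exp_sub, Real.exp_neg]
    field_simp
    ring
  -- integrability
  have hint₁g : IntegrableOn (fun x => K₁ * Real.exp x ^ 2) (Set.Iio a) :=
    ((integrableOn_exp_sq_Iic a).mono_set Set.Iio_subset_Iic_self).const_mul K₁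
  have hint₁ : IntegrableOn f (Set.Iio a) := hint₁g.congr_fun heq₁ measurableSet_Iio
  have hcont₂ : Continuous (fun x => (2 * P ^ 2 * Real.exp a ^ 2) * Real.exp (-x) ^ 2
      + (2 * Q ^ 2 / Real.exp b ^ 2) * Real.exp x ^ 2) := by fun_prop
  have hint₂g : IntegrableOn (fun x => (2 * P ^ 2 * Real.exp a ^ 2) * Real.exp (-x) ^ 2
      + (2 * Q ^ 2 / Real.exp b ^ 2) * Real.exp x ^ 2) (Set.Ico a b) :=
    (hcont₂.integrableOn_Icc).mono_set Set.Ico_subset_Icc_self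
  have hint₂ : IntegrableOn f (Set.Ico a b) := hint₂g.congr_fun heq₂ measurableSet_Ico
  have hint₃g : IntegrableOn (fun x => K₃ * Real.exp (-x) ^ 2) (Set.Ici b) := by
    rw [integrableOn_Ici_iff_integrableOn_Ioi]
    exact (integrableOn_exp_neg_sq_Ioi b).const_mul K₃
  have hint₃ : IntegrableOn f (Set.Ici b) := hint₃g.congr_fun heq₃ measurableSet_Ici
  -- splitting
  have hunion : Set.Ico a b ∪ Set.Ici b = Set.Ici a := Set.Ico_union_Ici_eq_Ici habk.le
  have hdisj : Disjoint (Set.Ico a b) (Set.Ici b) :=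
    Set.disjoint_left.2 fun x hx hx' => absurd hx.2 (not_lt.2 hx')
  have hintIci : IntegrableOn f (Set.Ici a) := by
    rw [← hunion]; exact hint₂.union hint₃
  have htotal : ∫ x : ℝ, f x
      = (∫ x in Set.Iio a, f x) + ((∫ x in Set.Ico a b, f x) + ∫ x in Set.Ici b, f x) := by
    rw [← intervalIntegral.integral_Iio_add_Ici hint₁ hintIci, ← hunion,
      setIntegral_union hdisj measurableSet_Ici hint₂ hint₃]
  -- compute the three pieces
  have hI₁ : ∫ x in Set.Iio a, f x = K₁ * (Real.exp a ^ 2 / 2) := by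
    rw [← setIntegral_congr_fun measurableSet_Iio heq₁, setIntegral_congr_set Iio_ae_eq_Iic,
      integral_const_mul, integral_exp_sq_Iic]
  have hI₃ : ∫ x in Set.Ici b, f x = K₃ * (Real.exp (-b) ^ 2 / 2) := by
    rw [← setIntegral_congr_fun measurableSet_Ici heq₃,
      ← setIntegral_congr_set (Ioi_ae_eq_Ici (a := b)), integral_const_mul,
      integral_exp_neg_sq_Ioi]
  have hI₂ : ∫ x in Set.Ico a b, f x
      = (2 * P ^ 2 * Real.exp a ^ 2) * ((Real.exp (-a) ^ 2 - Real.exp (-b) ^ 2) / 2)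
        + (2 * Q ^ 2 / Real.exp b ^ 2) * ((Real.exp b ^ 2 - Real.exp a ^ 2) / 2) := by
    rw [← setIntegral_congr_fun measurableSet_Ico heq₂, setIntegral_congr_set Ico_ae_eq_Ioc,
      ← intervalIntegral.integral_of_le habk.le]
    have ii1 : IntervalIntegrable
        (fun x => (2 * P ^ 2 * Real.exp a ^ 2) * Real.exp (-x) ^ 2) volume a b :=
      Continuous.intervalIntegrable (by fun_prop) a b
    have ii2 : IntervalIntegrable
        (fun x => (2 * Q ^ 2 / Real.exp b ^ 2) * Real.exp x ^ 2) volume a b :=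
      Continuous.intervalIntegrable (by fun_prop) a b
    rw [intervalIntegral.integral_add ii1 ii2,
      intervalIntegral.integral_const_mul, intervalIntegral.integral_const_mul,
      integral_exp_sq_ab, integral_exp_neg_sq_ab]
  have hstep : ∫ x : ℝ, f x = 2 * P ^ 2 + 2 * Q ^ 2 + 4 * P * Q * (Real.exp a / Real.exp b) := by
    rw [htotal, hI₁, hI₂, hI₃, hK₁def, hK₃def, Real.exp_neg, Real.exp_neg]
    field_simp
    ring
  have hfrac : Real.exp a / Real.exp b = L ^ 2 * E / ((c₁ - c₂ * E) * (c₁ * E - c₂)) := by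
    rw [← Real.exp_sub, hr]
  show ∫ x : ℝ, f x = 2 * c₁ ^ 2 + 2 * c₂ ^ 2
  rw [hstep, hfrac, hPval, hQval, hLdef]
  field_simp
  ring
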